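/- Let G be a group and K a subgroup of G such that for every g ∈ G the subgroups K and gKg⁻¹ are commensurable, i.e. K ∩ gKg⁻¹ has finite index in both K and gKg⁻¹. Let G act diagonally on the powers of the set G/K of left cosets. Then: (1) for any two G-orbits O and O' of the action of G on (G/K)², the set of G-orbits of triples (x,y,z) ∈ (G/K)³ with (x,y) ∈ O and (y,z) ∈ O' is finite; (2) for every triple (x,y,z) ∈ (G/K)³, the stabilizer of (x,y,z) under the diagonal G-action is a subgroup of finite index in the stabilizer of the pair (x,z). -/

import Mathlib

universe u

namespace HeckeFin

variable {G : Type u} [Group G]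

/-- The conjugate subgroup `gKg⁻¹`. -/
def conjSub (g : G) (K : Subgroup G) : Subgroup G :=
  Subgroup.map (MulAut.conj g).toMonoidHom K

open MulAction

lemma stab_mk (K : Subgroup G) (g : G) :
    MulAction.stabilizer G ((g : G ⧸ K)) = conjSub g K := by
  have : ((g : G ⧸ K)) = g • ((1 : G) : G ⧸ K) := by
    simp [QuotientGroup.mk_one]
  rw [this, MulAction.stabilizer_smul_eq_stabilizer_map_conj,
    MulAction.stabilizer_quotient]
  rfl

lemma stab_commensurable (K : Subgroup G)
    (hcomm : ∀ g : G,
      K.relIndex (conjSub g K) ≠ 0 ∧ (conjSub g K).relIndex K ≠ 0)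
    (a b : G ⧸ K) :
    Subgroup.Commensurable (MulAction.stabilizer G a) (MulAction.stabilizer G b) := by
  induction a using QuotientGroup.induction_on with
  | H g =>
  induction b using QuotientGroup.induction_on with
  | H h =>
  rw [stab_mk, stab_mk]
  have h1 : Subgroup.Commensurable K (conjSub g K) := ⟨(hcomm g).1, (hcomm g).2⟩
  have h2 : Subgroup.Commensurable K (conjSub h K) := ⟨(hcomm h).1, (hcomm h).2⟩
  exact h1.symm.trans h2

lemma mem_stab_pair {α : Type*} [MulAction G α] (a b : α) (g : G) :
    g ∈ MulAction.stabilizer G (a, b) ↔ g • a = a ∧ g • b = b := by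
  simp [MulAction.mem_stabilizer_iff, Prod.ext_iff]

lemma mem_stab_triple {α : Type*} [MulAction G α] (a b c : α) (g : G) :
    g ∈ MulAction.stabilizer G (a, b, c) ↔ g • a = a ∧ g • b = b ∧ g • c = c := by
  simp [MulAction.mem_stabilizer_iff, Prod.ext_iff]

lemma orbit_finite (K : Subgroup G)
    (hcomm : ∀ g : G,
      K.relIndex (conjSub g K) ≠ 0 ∧ (conjSub g K).relIndex K ≠ 0)
    (w : G ⧸ K) : Set.Finite (MulAction.orbit K w) := by
  have hstab : MulAction.stabilizer K w = (MulAction.stabilizer G w).subgroupOf K := by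
    ext ⟨k, hk⟩
    simp [MulAction.mem_stabilizer_iff, Subgroup.mem_subgroupOf, Subgroup.smul_def]
    exact Iff.rfl
  have hK : K = MulAction.stabilizer G (((1 : G) : G ⧸ K)) :=
    (MulAction.stabilizer_quotient K).symm
  have hidx : (MulAction.stabilizer K w).index ≠ 0 := by
    rw [hstab]
    have := (stab_commensurable K hcomm w (((1 : G) : G ⧸ K))).1
    rw [← hK] at this
    exact this
  have : Finite (K ⧸ MulAction.stabilizer K w) :=
    Nat.finite_of_card_ne_zero hidx
  have : Finite (MulAction.orbit K w) :=
    Finite.of_equiv _ (MulAction.orbitEquivQuotientStabilizer K w).symm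
  exact Set.finite_coe_iff.mp this

/-- Let `K ≤ G` be such that `K` and `gKg⁻¹` are commensurable for all
`g` (i.e. `K ∩ gKg⁻¹` has finite index in both).  Then:
(1) for any two `G`-orbits `O, O'` on `(G/K)²`, the set of `G`-orbits of triples
`(x,y,z) ∈ (G/K)³` with `(x,y) ∈ O` and `(y,z) ∈ O'` is finite;
(2) for every triple `(x,y,z)`, its stabilizer is a finite-index subgroup of the
stabilizer of the pair `(x,z)`. -/
theorem hecke_finiteness (K : Subgroup G)
    (hcomm : ∀ g : G,
      K.relIndex (conjSub g K) ≠ 0 ∧ (conjSub g K).relIndex K ≠ 0) :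
    (∀ O O' : Set ((G ⧸ K) × (G ⧸ K)),
      (∃ p, O = MulAction.orbit G p) → (∃ p', O' = MulAction.orbit G p') →
      Set.Finite
        (Quotient.mk (MulAction.orbitRel G ((G ⧸ K) × (G ⧸ K) × (G ⧸ K))) ''
          {t : (G ⧸ K) × (G ⧸ K) × (G ⧸ K) | (t.1, t.2.1) ∈ O ∧ (t.2.1, t.2.2) ∈ O'})) ∧
    (∀ x y z : G ⧸ K,
      MulAction.stabilizer G ((x, y, z) : (G ⧸ K) × (G ⧸ K) × (G ⧸ K)) ≤
        MulAction.stabilizer G ((x, z) : (G ⧸ K) × (G ⧸ K)) ∧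
      (MulAction.stabilizer G ((x, y, z) : (G ⧸ K) × (G ⧸ K) × (G ⧸ K))).relIndex
        (MulAction.stabilizer G ((x, z) : (G ⧸ K) × (G ⧸ K))) ≠ 0) := by
  constructor
  · -- part (1)
    rintro O O' ⟨p, rfl⟩ ⟨p', rfl⟩
    set e : G ⧸ K := ((1 : G) : G ⧸ K) with he
    obtain ⟨g₁, hg₁⟩ := MulAction.exists_smul_eq G p.2 e
    obtain ⟨g₂, hg₂⟩ := MulAction.exists_smul_eq G p'.1 e
    set x₀ : G ⧸ K := g₁ • p.1 with hx₀
    set z₀ : G ⧸ K := g₂ • p'.2 with hz₀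
    have hO : MulAction.orbit G p = MulAction.orbit G ((x₀, e) : (G ⧸ K) × (G ⧸ K)) := by
      have : ((x₀, e) : (G ⧸ K) × (G ⧸ K)) = g₁ • p := by
        simp [Prod.ext_iff, hx₀, hg₁]
      rw [this, MulAction.orbit_smul]
    have hO' : MulAction.orbit G p' = MulAction.orbit G ((e, z₀) : (G ⧸ K) × (G ⧸ K)) := by
      have : ((e, z₀) : (G ⧸ K) × (G ⧸ K)) = g₂ • p' := by
        simp [Prod.ext_iff, hz₀, hg₂]
      rw [this, MulAction.orbit_smul]
    have hKe : K = MulAction.stabilizer G e := (MulAction.stabilizer_quotient K).symm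
    have hfin₁ : Finite (MulAction.orbit K x₀) :=
      Set.finite_coe_iff.mpr (orbit_finite K hcomm x₀)
    have hfin₂ : Finite (MulAction.orbit K z₀) :=
      Set.finite_coe_iff.mpr (orbit_finite K hcomm z₀)
    let F : MulAction.orbit K x₀ × MulAction.orbit K z₀ →
        Quotient (MulAction.orbitRel G ((G ⧸ K) × (G ⧸ K) × (G ⧸ K))) :=
      fun q => Quotient.mk _ ((q.1 : G ⧸ K), e, (q.2 : G ⧸ K))
    apply Set.Finite.subset (Set.finite_range F)
    rintro _ ⟨t, ⟨ht1, ht2⟩, rfl⟩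
    rw [hO] at ht1
    rw [hO'] at ht2
    obtain ⟨g, hg⟩ := ht1
    obtain ⟨h, hh⟩ := ht2
    have hg1 : g • x₀ = t.1 := congrArg Prod.fst hg
    have hg2 : g • e = t.2.1 := congrArg Prod.snd hg
    have hh1 : h • e = t.2.1 := congrArg Prod.fst hh
    have hh2 : h • z₀ = t.2.2 := congrArg Prod.snd hh
    have hkK : g⁻¹ * h ∈ K := by
      rw [hKe]
      rw [MulAction.mem_stabilizer_iff, mul_smul, hh1, ← hg2, inv_smul_smul]
    refine ⟨⟨⟨x₀, MulAction.mem_orbit_self _⟩,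
      ⟨(⟨g⁻¹ * h, hkK⟩ : K) • z₀, MulAction.mem_orbit _ _⟩⟩, ?_⟩
    show Quotient.mk _ ((x₀ : G ⧸ K), e, ((⟨g⁻¹ * h, hkK⟩ : K) • z₀ : G ⧸ K)) = Quotient.mk _ t
    apply Quotient.sound
    show _ ∈ MulAction.orbit G t
    refine ⟨g⁻¹, ?_⟩
    have : ((⟨g⁻¹ * h, hkK⟩ : K) • z₀ : G ⧸ K) = (g⁻¹ * h) • z₀ := rfl
    rw [this]
    ext
    · show g⁻¹ • t.1 = x₀
      rw [← hg1, inv_smul_smul]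
    · show g⁻¹ • t.2.1 = e
      rw [← hg2, inv_smul_smul]
    · show g⁻¹ • t.2.2 = (g⁻¹ * h) • z₀
      rw [← hh2, mul_smul]
  · -- part (2)
    intro x y z
    have hle : MulAction.stabilizer G ((x, y, z) : (G ⧸ K) × (G ⧸ K) × (G ⧸ K)) ≤
        MulAction.stabilizer G ((x, z) : (G ⧸ K) × (G ⧸ K)) := by
      intro g hg
      rw [mem_stab_triple] at hg
      rw [mem_stab_pair]
      exact ⟨hg.1, hg.2.2⟩
    refine ⟨hle, ?_⟩
    have heq : MulAction.stabilizer G ((x, y, z) : (G ⧸ K) × (G ⧸ K) × (G ⧸ K)) =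
        MulAction.stabilizer G y ⊓ MulAction.stabilizer G ((x, z) : (G ⧸ K) × (G ⧸ K)) := by
      ext g
      rw [Subgroup.mem_inf, mem_stab_triple, mem_stab_pair, MulAction.mem_stabilizer_iff]
      tauto
    rw [heq, Subgroup.inf_relIndex_right]
    have h1 : (MulAction.stabilizer G y).relIndex (MulAction.stabilizer G x) ≠ 0 :=
      (stab_commensurable K hcomm y x).1
    have h2 : (MulAction.stabilizer G x).relIndex
        (MulAction.stabilizer G ((x, z) : (G ⧸ K) × (G ⧸ K))) ≠ 0 := by
      rw [Subgroup.relIndex_eq_one.mpr]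
      · exact one_ne_zero
      · intro g hg
        rw [mem_stab_pair] at hg
        exact hg.1
    exact Subgroup.relIndex_ne_zero_trans h1 h2
end HeckeFin
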